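/- For the n-qubit state |φ_N⟩ = (1/√(2^N − 1))[2^{N/2}|1⟩^⊗N − |+⟩^⊗N] with measurements u_k = σ_z (outcome +1 ↔ |0⟩) and v_k = −σ_x (outcome +1 ↔ |−⟩, −1 ↔ |+⟩), the Hardy-type conditions hold: (i) P(∀i: u_i = +1) = 1/(2^N(2^N − 1)) > 0; (ii) P(v_r = +1, u_s = +1) = 0 for all r ≠ s; (iii) P(∀i: v_i = −1) = 0. -/

import Mathlib

/-- Computational basis states `|0⟩`, `|1⟩` of a qubit. -/
noncomputable def ket (k : Fin 2) : EuclideanSpace ℂ (Fin 2) :=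
  EuclideanSpace.single k 1

/-- `|+⟩ = (|0⟩ + |1⟩)/√2`. -/
noncomputable def ketPlus : EuclideanSpace ℂ (Fin 2) :=
  (((Real.sqrt 2)⁻¹ : ℝ) : ℂ) • (ket 0 + ket 1)

/-- `|−⟩ = (|0⟩ − |1⟩)/√2`. -/
noncomputable def ketMinus : EuclideanSpace ℂ (Fin 2) :=
  (((Real.sqrt 2)⁻¹ : ℝ) : ℂ) • (ket 0 - ket 1)

/-- The product state `⊗ᵢ f i` of `N` qubits, as an element of `(ℂ²)^⊗N`
modeled by `EuclideanSpace ℂ (Fin N → Fin 2)`. -/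
noncomputable def prodN {N : ℕ} (f : Fin N → EuclideanSpace ℂ (Fin 2)) :
    EuclideanSpace ℂ (Fin N → Fin 2) :=
  (WithLp.equiv 2 _).symm (fun x => ∏ i, f i (x i))

/-- The Hardy/anonymous-veto state
`|φ_N⟩ = (1/√(2^N − 1)) [2^{N/2} |1⟩^{⊗N} − |+⟩^{⊗N}]`. -/
noncomputable def phiN (N : ℕ) : EuclideanSpace ℂ (Fin N → Fin 2) :=
  (((Real.sqrt (2 ^ N - 1))⁻¹ : ℝ) : ℂ) •
    (((Real.sqrt (2 ^ N) : ℝ) : ℂ) • prodN (fun _ => ket 1) - prodN (fun _ => ketPlus))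

lemma inner_prodN {N : ℕ} (f g : Fin N → EuclideanSpace ℂ (Fin 2)) :
    (inner ℂ (prodN f) (prodN g) : ℂ) = ∏ i, (inner ℂ (f i) (g i) : ℂ) := by
  simp only [PiLp.inner_apply, RCLike.inner_apply, prodN, WithLp.equiv_symm_apply, PiLp.toLp_apply,
    map_prod]
  rw [Finset.prod_univ_sum]
  simp [Finset.prod_mul_distrib]

lemma sq2 : Real.sqrt 2 * Real.sqrt 2 = 2 := Real.mul_self_sqrt (by norm_num)

lemma inner_ket0_ket1 : (inner ℂ (ket 0) (ket 1) : ℂ) = 0 := by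
  simp [ket, PiLp.inner_apply, RCLike.inner_apply, Fin.sum_univ_two,
    EuclideanSpace.single_apply]

lemma inner_ket0_ketPlus : (inner ℂ (ket 0) ketPlus : ℂ) = (((Real.sqrt 2)⁻¹ : ℝ) : ℂ) := by
  simp [ket, ketPlus, PiLp.inner_apply, RCLike.inner_apply, Fin.sum_univ_two,
    EuclideanSpace.single_apply]

lemma inner_ketPlus_ket1 : (inner ℂ ketPlus (ket 1) : ℂ) = (((Real.sqrt 2)⁻¹ : ℝ) : ℂ) := by
  simp [ket, ketPlus, PiLp.inner_apply, RCLike.inner_apply, Fin.sum_univ_two,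
    EuclideanSpace.single_apply, Complex.conj_ofReal]

lemma inner_ketPlus_ketPlus : (inner ℂ ketPlus ketPlus : ℂ) = 1 := by
  rw [PiLp.inner_apply]
  simp [ketPlus, ket, RCLike.inner_apply, Fin.sum_univ_two,
    EuclideanSpace.single_apply, Complex.conj_ofReal]
  have : ((Real.sqrt 2 : ℝ) : ℂ) * ((Real.sqrt 2 : ℝ) : ℂ) = 2 := by
    rw [← Complex.ofReal_mul, sq2]; norm_num
  field_simp
  rw [abs_of_nonneg (Real.sqrt_nonneg 2)]
  linear_combination (-1:ℂ) * this

lemma inner_ketMinus_ketPlus : (inner ℂ ketMinus ketPlus : ℂ) = 0 := by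
  simp [ketPlus, ketMinus, ket, PiLp.inner_apply, RCLike.inner_apply, Fin.sum_univ_two,
    EuclideanSpace.single_apply, Complex.conj_ofReal]

lemma inner_phiN {N : ℕ} (b : EuclideanSpace ℂ (Fin N → Fin 2)) :
    (inner ℂ b (phiN N) : ℂ) =
      (((Real.sqrt (2 ^ N - 1))⁻¹ : ℝ) : ℂ) *
        (((Real.sqrt (2 ^ N) : ℝ) : ℂ) * (inner ℂ b (prodN fun _ => ket 1) : ℂ) -
          (inner ℂ b (prodN fun _ => ketPlus) : ℂ)) := by
  simp only [phiN, inner_smul_right, inner_sub_right]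

lemma prod_const_cpow {N : ℕ} (c : ℝ) :
    (∏ _i : Fin N, ((c : ℂ))) = (((c ^ N : ℝ)) : ℂ) := by
  rw [Finset.prod_const, Finset.card_univ, Fintype.card_fin]
  push_cast
  ring

/-- For the `N`-qubit state `|φ_N⟩` with measurements
`u_k = σ_z` (outcome `+1` ↔ `|0⟩`, i.e. `ket 0`) and `v_k = −σ_x`
(outcome `+1` ↔ `|−⟩`, outcome `−1` ↔ `|+⟩`), the Hardy-type conditions hold:
(i) `P(∀ i : u_i = +1) = 1/(2^N (2^N − 1)) > 0`;
(ii) `P(v_r = +1, u_s = +1) = 0` for all `r ≠ s` (the marginal being computed with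
the remaining parties measured in the computational basis, summing the Born-rule
probabilities over their outcomes);
(iii) `P(∀ i : v_i = −1) = 0`. -/
theorem statement10 (N : ℕ) (hN : 1 ≤ N) :
    (‖(inner ℂ (prodN (fun _ : Fin N => ket 0)) (phiN N) : ℂ)‖ ^ 2 =
        1 / (2 ^ N * (2 ^ N - 1)) ∧
      0 < ‖(inner ℂ (prodN (fun _ : Fin N => ket 0)) (phiN N) : ℂ)‖ ^ 2) ∧
    (∀ r s : Fin N, r ≠ s →
      ∑ x : Fin N → Fin 2,
        (if x r = 0 ∧ x s = 0 then
          ‖(inner ℂ (prodN (fun i : Fin N =>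
              if i = r then ketMinus else if i = s then ket 0 else ket (x i)))
            (phiN N) : ℂ)‖ ^ 2 else 0) = 0) ∧
    ‖(inner ℂ (prodN (fun _ : Fin N => ketPlus)) (phiN N) : ℂ)‖ ^ 2 = 0 := by
  have h2N : (2:ℝ) ≤ 2 ^ N := by
    calc (2:ℝ) = 2 ^ 1 := (pow_one 2).symm
    _ ≤ 2 ^ N := pow_le_pow_right₀ one_le_two hN
  have hpos : (0:ℝ) < 2 ^ N - 1 := by linarith
  have i0 : Fin N := ⟨0, hN⟩
  have hc2 : ((Real.sqrt 2)⁻¹ : ℝ) ^ 2 = 2⁻¹ := by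
    rw [inv_pow, sq, sq2]
  have hA0 : (inner ℂ (prodN fun _ : Fin N => ket 0) (prodN fun _ : Fin N => ket 1) : ℂ) = 0 := by
    rw [inner_prodN]
    exact Finset.prod_eq_zero (Finset.mem_univ i0) inner_ket0_ket1
  have hB0 : (inner ℂ (prodN fun _ : Fin N => ket 0) (prodN fun _ : Fin N => ketPlus) : ℂ)
      = ((((Real.sqrt 2)⁻¹ : ℝ) ^ N : ℝ) : ℂ) := by
    rw [inner_prodN]
    simp only [inner_ket0_ketPlus]
    exact prod_const_cpow _
  have hinner1 : (inner ℂ (prodN fun _ : Fin N => ket 0) (phiN N) : ℂ)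
      = (((-((Real.sqrt (2 ^ N - 1))⁻¹ * ((Real.sqrt 2)⁻¹) ^ N)) : ℝ) : ℂ) := by
    rw [inner_phiN, hA0, hB0]
    push_cast
    ring
  refine ⟨⟨?_, ?_⟩, ?_, ?_⟩
  · rw [hinner1, Complex.norm_real, Real.norm_eq_abs, sq_abs, neg_sq, mul_pow, inv_pow,
      Real.sq_sqrt hpos.le, ← pow_mul, mul_comm N 2, pow_mul, hc2, inv_pow]
    field_simp
  · have hne : (inner ℂ (prodN fun _ : Fin N => ket 0) (phiN N) : ℂ) ≠ 0 := by
      rw [hinner1]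
      have h1 : (0:ℝ) < (Real.sqrt (2 ^ N - 1))⁻¹ * ((Real.sqrt 2)⁻¹) ^ N := by positivity
      exact Complex.ofReal_ne_zero.mpr (by linarith)
    exact pow_pos (norm_pos_iff.mpr hne) 2
  · intro r s hrs
    apply Finset.sum_eq_zero
    intro x _
    have key : (inner ℂ (prodN (fun i : Fin N =>
        if i = r then ketMinus else if i = s then ket 0 else ket (x i))) (phiN N) : ℂ) = 0 := by
      have hA : (inner ℂ (prodN (fun i : Fin N =>
          if i = r then ketMinus else if i = s then ket 0 else ket (x i)))
          (prodN fun _ : Fin N => ket 1) : ℂ) = 0 := by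
        rw [inner_prodN]
        apply Finset.prod_eq_zero (Finset.mem_univ s)
        rw [show (if s = r then ketMinus else if s = s then ket 0 else ket (x s)) = ket 0 by
          rw [if_neg (Ne.symm hrs), if_pos rfl]]
        exact inner_ket0_ket1
      have hB : (inner ℂ (prodN (fun i : Fin N =>
          if i = r then ketMinus else if i = s then ket 0 else ket (x i)))
          (prodN fun _ : Fin N => ketPlus) : ℂ) = 0 := by
        rw [inner_prodN]
        apply Finset.prod_eq_zero (Finset.mem_univ r)
        rw [show (if r = r then ketMinus else if r = s then ket 0 else ket (x r)) = ketMinus from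
          if_pos rfl]
        exact inner_ketMinus_ketPlus
      rw [inner_phiN, hA, hB]
      ring
    split_ifs <;> simp [key]
  · have hA : (inner ℂ (prodN fun _ : Fin N => ketPlus) (prodN fun _ : Fin N => ket 1) : ℂ)
        = ((((Real.sqrt 2)⁻¹ : ℝ) ^ N : ℝ) : ℂ) := by
      rw [inner_prodN]
      simp only [inner_ketPlus_ket1]
      exact prod_const_cpow _
    have hB : (inner ℂ (prodN fun _ : Fin N => ketPlus) (prodN fun _ : Fin N => ketPlus) : ℂ)
        = 1 := by
      rw [inner_prodN]
      simp only [inner_ketPlus_ketPlus]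
      exact Finset.prod_const_one
    have hsqrt : Real.sqrt (2 ^ N) = (Real.sqrt 2) ^ N := by
      have h1 : ((Real.sqrt 2) ^ N) ^ 2 = 2 ^ N := by
        rw [← pow_mul, mul_comm, pow_mul, Real.sq_sqrt (by norm_num : (0:ℝ) ≤ 2)]
      calc Real.sqrt (2 ^ N) = Real.sqrt (((Real.sqrt 2) ^ N) ^ 2) := by rw [h1]
      _ = (Real.sqrt 2) ^ N := Real.sqrt_sq (by positivity)
    have htr : Real.sqrt (2 ^ N) * ((Real.sqrt 2)⁻¹) ^ N = 1 := by
      rw [hsqrt, ← mul_pow, mul_inv_cancel₀ (Real.sqrt_pos.mpr (by norm_num : (0:ℝ) < 2)).ne',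
        one_pow]
    have key : (inner ℂ (prodN fun _ : Fin N => ketPlus) (phiN N) : ℂ) = 0 := by
      rw [inner_phiN, hA, hB, ← Complex.ofReal_mul, htr]
      norm_num
    simp [key]
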